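/- Let G be a group, K a central subgroup of G generated by an element f, and suppose additionally that for the quotient map s : G → G/K, whenever an element g of G has s(g) ≠ 1, the centralizer of s(g) in G/K is cyclic. If τ ∈ G with s(τ) ≠ 1 and f^n τ is conjugate to τ in G for some integer n, then f^n = 1. -/

import Mathlib

/-- If `f` is central, `K = ⟨f⟩`, `s : G → G/K` the quotient, and the centralizer of every
nontrivial element of `G/K` is cyclic, then for `τ` with `s τ ≠ 1`, if `fⁿτ` is conjugate
to `τ` then `fⁿ = 1`. -/
theorem stmt_4 {G : Type*} [Group G] (f : G) (hf : f ∈ Subgroup.center G)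
    [hN : (Subgroup.zpowers f).Normal]
    (hcent : ∀ g : G ⧸ Subgroup.zpowers f, g ≠ 1 → IsCyclic (Subgroup.centralizer {g}))
    (τ : G) (hτ : QuotientGroup.mk' (Subgroup.zpowers f) τ ≠ 1)
    (n : ℤ) (hconj : IsConj (f ^ n * τ) τ) : f ^ n = 1 := by
  set K := Subgroup.zpowers f with hK
  set s := QuotientGroup.mk' K with hs
  obtain ⟨c, hc⟩ := hconj
  set u : G := (c : G) with hu
  have hc' : u * (f ^ n * τ) = τ * u := hc
  set d := u⁻¹ with hdd
  have hdτ : d * τ * d⁻¹ = f ^ n * τ := by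
    rw [hdd]
    calc u⁻¹ * τ * u⁻¹⁻¹ = u⁻¹ * (τ * u) := by group
    _ = u⁻¹ * (u * (f ^ n * τ)) := by rw [hc']
    _ = f ^ n * τ := by group
  -- s d centralizes s τ
  have hfn : s (f ^ n) = 1 := by
    apply (QuotientGroup.eq_one_iff _).mpr
    exact Subgroup.zpow_mem K (Subgroup.mem_zpowers f) n
  have hsd : s d ∈ Subgroup.centralizer {s τ} := by
    rw [Subgroup.mem_centralizer_iff]
    intro g hg
    rcases hg with rfl
    have h1 : s (d * τ * d⁻¹) = s (f ^ n * τ) := by rw [hdτ]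
    simp only [map_mul, hfn, one_mul, map_inv] at h1
    -- h1 : s d * s τ * (s d)⁻¹ = s τ
    calc s τ * s d = s d * s τ * (s d)⁻¹ * s d := by rw [h1]
    _ = s d * s τ := by group
  have hsτ : s τ ∈ Subgroup.centralizer {s τ} := by
    rw [Subgroup.mem_centralizer_iff]
    intro g hg
    rcases hg with rfl
    rfl
  obtain ⟨ζ, hζ⟩ := (hcent (s τ) hτ).exists_generator
  obtain ⟨b, hb⟩ := Subgroup.mem_zpowers_iff.mp (hζ ⟨s τ, hsτ⟩)
  obtain ⟨a, ha⟩ := Subgroup.mem_zpowers_iff.mp (hζ ⟨s d, hsd⟩)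
  have hb' : (ζ : G ⧸ K) ^ b = s τ := by
    have := congrArg (Subtype.val) hb
    simpa using this
  have ha' : (ζ : G ⧸ K) ^ a = s d := by
    have := congrArg (Subtype.val) ha
    simpa using this
  obtain ⟨x, hx⟩ := QuotientGroup.mk'_surjective K (ζ : G ⧸ K)
  -- x ^ b = f ^ j * τ for some j
  have hxb : x ^ b * τ⁻¹ ∈ K := by
    rw [hK, ← QuotientGroup.eq_one_iff (x ^ b * τ⁻¹)]
    have : s (x ^ b * τ⁻¹) = 1 := by
      rw [map_mul, map_inv, map_zpow, hx, hb', mul_inv_cancel]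
    exact this
  obtain ⟨j, hj⟩ := Subgroup.mem_zpowers_iff.mp hxb
  have hxbe : x ^ b = f ^ j * τ := by
    rw [hj]
    group
  -- f ^ j is central, so x commutes with f ^ j; x commutes with x ^ b, hence x commutes with τ
  have hfjc : ∀ g : G, g * f ^ j = f ^ j * g := fun g =>
    (Subgroup.mem_center_iff.mp (Subgroup.zpow_mem (Subgroup.center G) hf j)) g
  have hcomm : Commute x τ := by
    have h1 : Commute x (x ^ b) := (Commute.refl x).zpow_right b
    rw [hxbe] at h1
    have h2 : Commute x (f ^ j) := hfjc x
    have := h1.mul_right h2.inv_right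
    -- Commute x (f^j * τ * (f^j)⁻¹)
    have he : f ^ j * τ * (f ^ j)⁻¹ = τ := by
      rw [← hfjc τ]
      group
    rwa [he] at this
  -- d = f ^ i * x ^ a for some i
  have hda : d * (x ^ a)⁻¹ ∈ K := by
    rw [hK, ← QuotientGroup.eq_one_iff]
    have : s (d * (x ^ a)⁻¹) = 1 := by
      simp only [map_mul, map_inv, map_zpow, hx]
      rw [show s x = (ζ : G ⧸ K) from hx, ha']
      simp [hdd]
    exact this
  obtain ⟨i, hi⟩ := Subgroup.mem_zpowers_iff.mp hda
  have hde : d = f ^ i * x ^ a := by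
    rw [hi]
    group
  have hfic : Commute (f ^ i) τ :=
    ((Subgroup.mem_center_iff.mp (Subgroup.zpow_mem (Subgroup.center G) hf i)) τ).symm
  have hdc : Commute d τ := by
    rw [hde]
    exact hfic.mul_left (hcomm.zpow_left a)
  -- conclude
  have : f ^ n * τ = τ := by
    rw [← hdτ, hdc.eq]
    group
  exact mul_right_cancel (by rw [this, one_mul])
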